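/- For all integers m, n ≥ 1, the number of spanning trees of the complete bipartite graph K_{m,n} equals m^{n−1} · n^{m−1}. -/

import Mathlib

open Finset SimpleGraph
set_option linter.unusedSectionVars false
set_option maxHeartbeats 1000000

variable {V : Type*} [Fintype V] [DecidableEq V]

open scoped Classical in
noncomputable def degE (E : Finset (Sym2 V)) (x : V) : ℕ :=
  (E.filter (fun e => x ∈ e)).card

def TreeOn (S T : Finset V) (E : Finset (Sym2 V)) : Prop :=
  (∀ e ∈ E, ∃ a ∈ S, ∃ b ∈ T, e = s(a, b)) ∧
  (∀ x ∈ S ∪ T, ∀ y ∈ S ∪ T, (SimpleGraph.fromEdgeSet (E : Set (Sym2 V))).Reachable x y) ∧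
  (SimpleGraph.fromEdgeSet (E : Set (Sym2 V))).IsAcyclic

lemma walk_head_edge {G : SimpleGraph V} {x y : V} (hxy : x ≠ y) (p : G.Walk x y) :
    ∃ e ∈ p.edges, x ∈ e := by
  obtain ⟨w, h, q, rfl⟩ := SimpleGraph.Walk.exists_eq_cons_of_ne hxy p
  exact ⟨s(x, w), by simp, by simp⟩

lemma walk_last_edge {G : SimpleGraph V} {x y : V} (hxy : x ≠ y) (p : G.Walk x y) :
    ∃ e ∈ p.edges, y ∈ e := by
  obtain ⟨e, he, hy⟩ := walk_head_edge hxy.symm p.reverse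
  exact ⟨e, by simpa using he, hy⟩

lemma interior_two_edges {G : SimpleGraph V} {x y z : V} (p : G.Walk x y)
    (hnodup : p.edges.Nodup) (hz : z ∈ p.support) (hx : z ≠ x) (hy : z ≠ y) :
    ∃ e₁ ∈ p.edges, ∃ e₂ ∈ p.edges, e₁ ≠ e₂ ∧ z ∈ e₁ ∧ z ∈ e₂ := by
  have hsplit := p.take_spec hz
  obtain ⟨e₁, he₁, hz₁⟩ := walk_last_edge hx.symm (p.takeUntil z hz)
  obtain ⟨e₂, he₂, hz₂⟩ := walk_head_edge hy (p.dropUntil z hz)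
  have hedges : (p.takeUntil z hz).edges ++ (p.dropUntil z hz).edges = p.edges := by
    rw [← SimpleGraph.Walk.edges_append, hsplit]
  have hnd : ((p.takeUntil z hz).edges ++ (p.dropUntil z hz).edges).Nodup := hedges ▸ hnodup
  have hdisj := List.disjoint_of_nodup_append hnd
  exact ⟨e₁, by rw [← hedges]; exact List.mem_append_left _ he₁,
         e₂, by rw [← hedges]; exact List.mem_append_right _ he₂,
         fun h => hdisj he₁ (h ▸ he₂), hz₁, hz₂⟩

lemma not_mem_support_of_unique_edge {G : SimpleGraph V} {x y z : V}
    {e₀ : Sym2 V} (hG : ∀ e ∈ G.edgeSet, z ∈ e → e = e₀)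
    {p : G.Walk x y} (hnodup : p.edges.Nodup) (hx : z ≠ x) (hy : z ≠ y) :
    z ∉ p.support := by
  intro hz
  obtain ⟨e₁, he₁, e₂, he₂, hne, h1, h2⟩ := interior_two_edges p hnodup hz hx hy
  have t1 := hG e₁ (p.edges_subset_edgeSet he₁) h1
  have t2 := hG e₂ (p.edges_subset_edgeSet he₂) h2
  exact hne (t1.trans t2.symm)

lemma edgeSet_eq {S T : Finset V} {E : Finset (Sym2 V)} (hd : Disjoint S T)
    (h : ∀ e ∈ E, ∃ a ∈ S, ∃ b ∈ T, e = s(a, b)) :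
    (SimpleGraph.fromEdgeSet (E : Set (Sym2 V))).edgeSet = (E : Set (Sym2 V)) := by
  rw [SimpleGraph.edgeSet_fromEdgeSet]
  ext e
  simp only [Set.mem_diff, Set.mem_setOf_eq, Finset.mem_coe, and_iff_left_iff_imp]
  intro he
  obtain ⟨a, ha, b, hb, rfl⟩ := h e he
  have : a ≠ b := fun hab => Finset.disjoint_left.mp hd ha (hab ▸ hb)
  simp [this]

/-- Removing a leaf edge from a tree gives a tree. -/
lemma TreeOn.remove {S T : Finset V} {E : Finset (Sym2 V)} (hd : Disjoint S T)
    (h : TreeOn S T E) {u v : V} (hu : u ∈ S) (hv : v ∈ T)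
    (huv : s(u, v) ∈ E) (hdeg : ∀ e ∈ E, v ∈ e → e = s(u, v)) :
    TreeOn S (T.erase v) (E.erase s(u, v)) := by
  obtain ⟨h1, h2, h3⟩ := h
  have hvS : v ∉ S := fun hvS => Finset.disjoint_left.mp hd hvS hv
  have hES := edgeSet_eq hd h1
  have hkey : ∀ e ∈ (SimpleGraph.fromEdgeSet (E : Set (Sym2 V))).edgeSet, v ∈ e → e = s(u, v) := by
    rw [hES]; exact fun e he hv => hdeg e he hv
  refine ⟨?_, ?_, ?_⟩
  · intro e he
    rw [Finset.mem_erase] at he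
    obtain ⟨a, ha, b, hb, rfl⟩ := h1 e he.2
    refine ⟨a, ha, b, Finset.mem_erase.mpr ⟨?_, hb⟩, rfl⟩
    rintro rfl
    exact he.1 (hdeg _ he.2 (by simp))
  · intro x hx y hy
    have hx' : x ∈ S ∪ T := by
      rcases Finset.mem_union.mp hx with h' | h'
      · exact Finset.mem_union_left _ h'
      · exact Finset.mem_union_right _ (Finset.mem_of_mem_erase h')
    have hy' : y ∈ S ∪ T := by
      rcases Finset.mem_union.mp hy with h' | h'
      · exact Finset.mem_union_left _ h'
      · exact Finset.mem_union_right _ (Finset.mem_of_mem_erase h')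
    have hxv : v ≠ x := by
      rintro rfl
      rcases Finset.mem_union.mp hx with h' | h'
      · exact hvS h'
      · exact (Finset.notMem_erase v T) h'
    have hyv : v ≠ y := by
      rintro rfl
      rcases Finset.mem_union.mp hy with h' | h'
      · exact hvS h'
      · exact (Finset.notMem_erase v T) h'
    obtain ⟨w⟩ := h2 x hx' y hy'
    have hp := w.bypass_isPath
    set p := w.bypass with hpdef
    have hnodup : p.edges.Nodup := hp.isTrail.edges_nodup
    have hvsup : v ∉ p.support :=
      not_mem_support_of_unique_edge hkey hnodup hxv hyv
    have hsub : ∀ e ∈ p.edges,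
        e ∈ (SimpleGraph.fromEdgeSet ((E.erase s(u, v) : Finset (Sym2 V)) : Set (Sym2 V))).edgeSet := by
      intro e he
      have heE : e ∈ (SimpleGraph.fromEdgeSet (E : Set (Sym2 V))).edgeSet :=
        p.edges_subset_edgeSet he
      have hnuv : e ≠ s(u, v) := by
        rintro rfl
        exact hvsup (p.snd_mem_support_of_mem_edges he)
      rw [SimpleGraph.edgeSet_fromEdgeSet] at heE ⊢
      refine ⟨?_, heE.2⟩
      rw [Finset.coe_erase]
      exact ⟨heE.1, hnuv⟩
    exact ⟨(p.transfer _ hsub)⟩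
  · intro w c hc
    have hle : ∀ e ∈ c.edges, e ∈ (SimpleGraph.fromEdgeSet (E : Set (Sym2 V))).edgeSet := by
      intro e he
      have := c.edges_subset_edgeSet he
      rw [SimpleGraph.edgeSet_fromEdgeSet] at this ⊢
      rw [Finset.coe_erase] at this
      exact ⟨this.1.1, this.2⟩
    exact h3 _ (hc.transfer hle)

/-- Adding a pendant edge to a tree gives a tree. -/
lemma TreeOn.insertLeaf {S T : Finset V} {E : Finset (Sym2 V)} (hd : Disjoint S T)
    (h : TreeOn S T E) {u v : V} (hu : u ∈ S) (hv : v ∉ S ∪ T) :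
    TreeOn S (insert v T) (insert s(u, v) E) := by
  obtain ⟨h1, h2, h3⟩ := h
  have huv : u ≠ v := fun h' => hv (Finset.mem_union_left _ (h' ▸ hu))
  set E' : Finset (Sym2 V) := insert s(u, v) E with hE'def
  have hE'coe : (E' : Set (Sym2 V)) = insert s(u, v) (E : Set (Sym2 V)) := by
    rw [hE'def, Finset.coe_insert]
  have hGle : SimpleGraph.fromEdgeSet (E : Set (Sym2 V)) ≤
      SimpleGraph.fromEdgeSet (E' : Set (Sym2 V)) := by
    apply SimpleGraph.fromEdgeSet_mono
    rw [hE'coe]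
    exact Set.subset_insert _ _
  have hadj : (SimpleGraph.fromEdgeSet (E' : Set (Sym2 V))).Adj u v := by
    rw [SimpleGraph.fromEdgeSet_adj]
    exact ⟨by rw [hE'coe]; exact Set.mem_insert _ _, huv⟩
  have hkey : ∀ e ∈ (SimpleGraph.fromEdgeSet (E' : Set (Sym2 V))).edgeSet,
      v ∈ e → e = s(u, v) := by
    intro e he hve
    rw [SimpleGraph.edgeSet_fromEdgeSet, hE'coe] at he
    rcases he.1 with h' | h'
    · exact h'
    · obtain ⟨a, ha, b, hb, rfl⟩ := h1 e h'
      rcases Sym2.mem_iff.mp hve with rfl | rfl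
      · exact absurd (Finset.mem_union_left _ ha) hv
      · exact absurd (Finset.mem_union_right _ hb) hv
  refine ⟨?_, ?_, ?_⟩
  · intro e he
    rcases Finset.mem_insert.mp he with rfl | he'
    · exact ⟨u, hu, v, Finset.mem_insert_self _ _, rfl⟩
    · obtain ⟨a, ha, b, hb, rfl⟩ := h1 e he'
      exact ⟨a, ha, b, Finset.mem_insert_of_mem hb, rfl⟩
  · have hreach : ∀ x ∈ S ∪ T,
        (SimpleGraph.fromEdgeSet (E' : Set (Sym2 V))).Reachable v x := by
      intro x hx
      exact (hadj.symm.reachable).trans ((h2 u (Finset.mem_union_left _ hu) x hx).mono hGle)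
    intro x hx y hy
    have hx' : x = v ∨ x ∈ S ∪ T := by
      rcases Finset.mem_union.mp hx with h' | h'
      · exact Or.inr (Finset.mem_union_left _ h')
      · rcases Finset.mem_insert.mp h' with h'' | h''
        · exact Or.inl h''
        · exact Or.inr (Finset.mem_union_right _ h'')
    have hy' : y = v ∨ y ∈ S ∪ T := by
      rcases Finset.mem_union.mp hy with h' | h'
      · exact Or.inr (Finset.mem_union_left _ h')
      · rcases Finset.mem_insert.mp h' with h'' | h''
        · exact Or.inl h''
        · exact Or.inr (Finset.mem_union_right _ h'')
    rcases hx' with rfl | hx'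
    · rcases hy' with rfl | hy'
      · exact SimpleGraph.Reachable.refl _
      · exact hreach y hy'
    · rcases hy' with rfl | hy'
      · exact (hreach x hx').symm
      · exact ((hreach x hx').symm).trans (hreach y hy')
  · intro w c hc
    by_cases hmem : s(u, v) ∈ c.edges
    · have hvsup : v ∈ c.support := c.snd_mem_support_of_mem_edges hmem
      have hc' := hc.rotate hvsup
      set c' := c.rotate v hvsup with hc'def
      have hnodup := hc'.isCircuit.isTrail.edges_nodup
      have hnn : ¬ c'.Nil := by
        have h3l := hc'.three_le_length
        rw [SimpleGraph.Walk.not_nil_iff_lt_length]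
        omega
      obtain ⟨w', hadj', q, hcc⟩ := SimpleGraph.Walk.not_nil_iff.mp hnn
      have hw' : w' ≠ v := hadj'.ne'
      obtain ⟨e2, he2, hve2⟩ := walk_last_edge hw' q
      have he2uv : e2 = s(u, v) := hkey e2 (q.edges_subset_edgeSet he2) hve2
      have he1uv : s(v, w') = s(u, v) := by
        apply hkey
        · apply c'.edges_subset_edgeSet
          rw [hcc]; simp
        · simp
      rw [hcc] at hnodup
      simp only [SimpleGraph.Walk.edges_cons, List.nodup_cons] at hnodup
      exact hnodup.1 (by rw [he1uv]; exact he2uv ▸ he2)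
    · have hsub : ∀ e ∈ c.edges, e ∈ (SimpleGraph.fromEdgeSet (E : Set (Sym2 V))).edgeSet := by
        intro e he
        have := c.edges_subset_edgeSet he
        rw [SimpleGraph.edgeSet_fromEdgeSet] at this ⊢
        rw [Finset.coe_insert] at this
        rcases this.1 with h' | h'
        · exact absurd (h' ▸ he) hmem
        · exact ⟨h', this.2⟩
      exact h3 _ (hc.transfer hsub)

open scoped Classical


lemma degE_erase_not_mem {E : Finset (Sym2 V)} {e : Sym2 V} {x : V} (hx : x ∉ e) :
    degE (E.erase e) x = degE E x := by
  unfold degE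
  rw [Finset.filter_erase, Finset.erase_eq_of_notMem]
  simp [hx]

lemma degE_erase_mem {E : Finset (Sym2 V)} {e : Sym2 V} {x : V} (he : e ∈ E) (hx : x ∈ e) :
    degE (E.erase e) x = degE E x - 1 := by
  unfold degE
  rw [Finset.filter_erase, Finset.card_erase_of_mem (Finset.mem_filter.mpr ⟨he, hx⟩)]

lemma degE_insert_mem {E : Finset (Sym2 V)} {e : Sym2 V} {x : V} (he : e ∉ E) (hx : x ∈ e) :
    degE (insert e E) x = degE E x + 1 := by
  unfold degE
  rw [Finset.filter_insert, if_pos hx, Finset.card_insert_of_notMem (fun h => he (Finset.mem_filter.mp h).1)]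

lemma degE_insert_not_mem {E : Finset (Sym2 V)} {e : Sym2 V} {x : V} (hx : x ∉ e) :
    degE (insert e E) x = degE E x := by
  unfold degE
  rw [Finset.filter_insert, if_neg hx]

lemma unique_edge_of_degE_one {E : Finset (Sym2 V)} {z : V} (h : degE E z = 1)
    {e₀ : Sym2 V} (he₀ : e₀ ∈ E) (hz : z ∈ e₀) : ∀ e ∈ E, z ∈ e → e = e₀ := by
  intro e he hze
  rw [degE, Finset.card_eq_one] at h
  obtain ⟨a, ha⟩ := h
  have h1 : e ∈ E.filter (fun e => z ∈ e) := Finset.mem_filter.mpr ⟨he, hze⟩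
  have h2 : e₀ ∈ E.filter (fun e => z ∈ e) := Finset.mem_filter.mpr ⟨he₀, hz⟩
  rw [ha, Finset.mem_singleton] at h1 h2
  rw [h1, h2]

lemma degE_eq_zero {E : Finset (Sym2 V)} {z : V} (h : ∀ e ∈ E, z ∉ e) : degE E z = 0 := by
  rw [degE, Finset.card_eq_zero, Finset.filter_eq_empty_iff]
  exact h

open scoped Classical in
noncomputable def treeCount (S T : Finset V) (k : V → ℕ) : ℕ :=
  (Finset.univ.filter (fun E : Finset (Sym2 V) =>
     TreeOn S T E ∧ ∀ x ∈ S ∪ T, degE E x = k x + 1)).card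

lemma TreeOn.comm {S T : Finset V} {E : Finset (Sym2 V)} :
    TreeOn S T E ↔ TreeOn T S E := by
  constructor <;>
  · rintro ⟨h1, h2, h3⟩
    refine ⟨fun e he => ?_, fun x hx y hy => ?_, h3⟩
    · obtain ⟨a, ha, b, hb, rfl⟩ := h1 e he
      exact ⟨b, hb, a, ha, Sym2.eq_swap⟩
    · exact h2 x (by rwa [Finset.union_comm]) y (by rwa [Finset.union_comm])

lemma treeCount_comm (S T : Finset V) (k : V → ℕ) :
    treeCount S T k = treeCount T S k := by
  classical
  unfold treeCount
  congr 1
  apply Finset.filter_congr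
  intro E _
  rw [TreeOn.comm, Finset.union_comm]

lemma TreeOn.not_isDiag {S T : Finset V} {E : Finset (Sym2 V)} (hd : Disjoint S T)
    (h : ∀ e ∈ E, ∃ a ∈ S, ∃ b ∈ T, e = s(a, b)) : ∀ e ∈ E, ¬ e.IsDiag := by
  intro e he
  obtain ⟨a, ha, b, hb, rfl⟩ := h e he
  have : a ≠ b := fun hab => Finset.disjoint_left.mp hd ha (hab ▸ hb)
  simp [this]

-- the unique edge at a degree-one vertex
lemma exists_unique_edge {E : Finset (Sym2 V)} {v : V} (h : degE E v = 1) :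
    ∃ e ∈ E, v ∈ e ∧ ∀ e' ∈ E, v ∈ e' → e' = e := by
  classical
  rw [degE, Finset.card_eq_one] at h
  obtain ⟨e, he⟩ := h
  have hm : e ∈ E.filter (fun e => v ∈ e) := by rw [he]; exact Finset.mem_singleton_self e
  rw [Finset.mem_filter] at hm
  refine ⟨e, hm.1, hm.2, fun e' he' hv => ?_⟩
  have : e' ∈ E.filter (fun e => v ∈ e) := Finset.mem_filter.mpr ⟨he', hv⟩
  rwa [he, Finset.mem_singleton] at this

lemma degE_pos {S T : Finset V} {E : Finset (Sym2 V)} (hd : Disjoint S T) (h : TreeOn S T E)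
    {x : V} (hx : x ∈ S ∪ T) (h2 : 2 ≤ (S ∪ T).card) : 1 ≤ degE E x := by
  obtain ⟨h1, hreach, _⟩ := h
  obtain ⟨y, hy, hyx⟩ : ∃ y ∈ S ∪ T, y ≠ x := Finset.exists_mem_ne h2 x
  obtain ⟨w⟩ := hreach x hx y hy
  obtain ⟨e, he, hxe⟩ := walk_head_edge (Ne.symm hyx) w
  have heE : e ∈ E := by
    have := w.edges_subset_edgeSet he
    rwa [edgeSet_eq hd h1] at this
  rw [degE, Nat.succ_le_iff, Finset.card_pos]
  exact ⟨e, Finset.mem_filter.mpr ⟨heE, hxe⟩⟩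

lemma step_count {S T : Finset V} (hd : Disjoint S T) {v : V} (hv : v ∈ T)
    {k : V → ℕ} (hkv : k v = 0) (hS : S.Nonempty) (hT2 : 2 ≤ T.card) :
    treeCount S T k = ∑ u ∈ S, (if k u = 0 then 0 else
      treeCount S (T.erase v) (Function.update k u (k u - 1))) := by
  classical
  have hvS : v ∉ S := fun h => Finset.disjoint_left.mp hd h hv
  have hcard : 3 ≤ (S ∪ T).card := by
    rw [Finset.card_union_of_disjoint hd]
    have := hS.card_pos
    omega
  set A := Finset.univ.filter (fun E : Finset (Sym2 V) =>
     TreeOn S T E ∧ ∀ x ∈ S ∪ T, degE E x = k x + 1) with hA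
  have hTC : treeCount S T k = A.card := rfl
  set f : V → Finset (Finset (Sym2 V)) := fun u => A.filter (fun E => s(u, v) ∈ E) with hf
  -- every counted tree has a unique neighbour of `v`
  have hedge : ∀ E ∈ A, ∃ u ∈ S, s(u, v) ∈ E := by
    intro E hE
    rw [hA, Finset.mem_filter] at hE
    obtain ⟨-, ⟨h1, h2, h3⟩, hdeg⟩ := hE
    have hdv : degE E v = 1 := by rw [hdeg v (Finset.mem_union_right _ hv), hkv]
    obtain ⟨e, heE, hve, -⟩ := exists_unique_edge hdv
    obtain ⟨a, ha, b, hb, rfl⟩ := h1 e heE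
    rcases Sym2.mem_iff.mp hve with rfl | rfl
    · exact absurd ha hvS
    · exact ⟨a, ha, heE⟩
  have hcover : A = S.biUnion f := by
    ext E
    simp only [hf, Finset.mem_biUnion, Finset.mem_filter]
    constructor
    · intro hE
      obtain ⟨u, hu, huv⟩ := hedge E hE
      exact ⟨u, hu, hE, huv⟩
    · rintro ⟨u, hu, hE, -⟩
      exact hE
  have hdisjU : ∀ u₁ ∈ S, ∀ u₂ ∈ S, u₁ ≠ u₂ → Disjoint (f u₁) (f u₂) := by
    intro u₁ h₁ u₂ h₂ hne
    rw [Finset.disjoint_left]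
    intro E hE1 hE2
    simp only [hf, Finset.mem_filter] at hE1 hE2
    have hEA := hE1.1
    rw [hA, Finset.mem_filter] at hEA
    obtain ⟨-, -, hdeg⟩ := hEA
    have hdv : degE E v = 1 := by rw [hdeg v (Finset.mem_union_right _ hv), hkv]
    have hne' : s(u₁, v) ≠ s(u₂, v) := by
      intro hcon
      rw [Sym2.eq_iff] at hcon
      rcases hcon with ⟨rfl, -⟩ | ⟨rfl, rfl⟩
      · exact hne rfl
      · exact hvS h₁
    have hsub : {s(u₁, v), s(u₂, v)} ⊆ E.filter (fun e => v ∈ e) := by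
      intro e he
      rcases Finset.mem_insert.mp he with rfl | he
      · exact Finset.mem_filter.mpr ⟨hE1.2, by simp⟩
      · rw [Finset.mem_singleton] at he
        subst he
        exact Finset.mem_filter.mpr ⟨hE2.2, by simp⟩
    have hle := Finset.card_le_card hsub
    rw [Finset.card_pair hne'] at hle
    rw [degE] at hdv
    omega
  have hcardu : ∀ u ∈ S, (f u).card = (if k u = 0 then 0 else
      treeCount S (T.erase v) (Function.update k u (k u - 1))) := by
    intro u hu
    have huS : u ≠ v := fun h => hvS (h ▸ hu)
    by_cases hku : k u = 0
    · rw [if_pos hku, Finset.card_eq_zero, Finset.eq_empty_iff_forall_notMem]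
      intro E hE
      simp only [hf, Finset.mem_filter, hA, Finset.mem_univ, true_and] at hE
      obtain ⟨⟨⟨h1, h2, h3⟩, hdeg⟩, huvE⟩ := hE
      have hdv : degE E v = 1 := by rw [hdeg v (Finset.mem_union_right _ hv), hkv]
      have hdu : degE E u = 1 := by rw [hdeg u (Finset.mem_union_left _ hu), hku]
      have huniq_u : ∀ e ∈ E, u ∈ e → e = s(u, v) :=
        unique_edge_of_degE_one hdu huvE (by simp)
      have huniq_v : ∀ e ∈ E, v ∈ e → e = s(u, v) :=
        unique_edge_of_degE_one hdv huvE (by simp)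
      obtain ⟨w, hw, hwu, hwv⟩ : ∃ w ∈ S ∪ T, w ≠ u ∧ w ≠ v := by
        by_contra hcon
        push_neg at hcon
        have hsub2 : S ∪ T ⊆ {u, v} := by
          intro x hx
          by_cases hxu : x = u
          · simp [hxu]
          · simp [hcon x hx hxu]
        have := Finset.card_le_card hsub2
        have h2' := Finset.card_insert_le u ({v} : Finset V)
        simp only [Finset.card_singleton] at h2'
        omega
      obtain ⟨p0⟩ := h2 w hw v (Finset.mem_union_right _ hv)
      have hp := p0.bypass_isPath
      have hnodup := hp.isTrail.edges_nodup
      obtain ⟨e, he, hve⟩ := walk_last_edge hwv p0.bypass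
      have heE : e ∈ E := by
        have := p0.bypass.edges_subset_edgeSet he
        rwa [edgeSet_eq hd h1] at this
      have heuv : e = s(u, v) := huniq_v e heE hve
      have husup : u ∈ p0.bypass.support :=
        p0.bypass.fst_mem_support_of_mem_edges (heuv ▸ he)
      have hkey : ∀ e ∈ (SimpleGraph.fromEdgeSet (E : Set (Sym2 V))).edgeSet,
          u ∈ e → e = s(u, v) := by
        rw [edgeSet_eq hd h1]
        exact huniq_u
      exact not_mem_support_of_unique_edge hkey hnodup (Ne.symm hwu) huS husup
    · rw [if_neg hku]
      have hkuge : 1 ≤ k u := Nat.one_le_iff_ne_zero.mpr hku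
      rw [treeCount]
      refine Finset.card_bij' (fun E _ => E.erase s(u, v))
        (fun F _ => insert s(u, v) F) ?_ ?_ ?_ ?_
      · -- i maps into target
        intro E hE
        simp only [hf, Finset.mem_filter, hA, Finset.mem_univ, true_and] at hE
        obtain ⟨⟨hT0, hdeg⟩, huvE⟩ := hE
        obtain ⟨h1, h2, h3⟩ := hT0
        have hdv : degE E v = 1 := by rw [hdeg v (Finset.mem_union_right _ hv), hkv]
        have huniq_v : ∀ e ∈ E, v ∈ e → e = s(u, v) :=
          unique_edge_of_degE_one hdv huvE (by simp)
        simp only [Finset.mem_filter, Finset.mem_univ, true_and]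
        constructor
        · exact TreeOn.remove hd ⟨h1, h2, h3⟩ hu hv huvE huniq_v
        · intro x hx
          have hxST : x ∈ S ∪ T := by
            rcases Finset.mem_union.mp hx with h' | h'
            · exact Finset.mem_union_left _ h'
            · exact Finset.mem_union_right _ (Finset.mem_of_mem_erase h')
          have hxv : x ≠ v := by
            rintro rfl
            rcases Finset.mem_union.mp hx with h' | h'
            · exact hvS h'
            · exact Finset.notMem_erase x T h'
          by_cases hxu : x = u
          · subst hxu
            rw [degE_erase_mem huvE (by simp), hdeg x hxST, Function.update_self]
            omega
          · have hxe : x ∉ s(u, v) := by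
              rw [Sym2.mem_iff]
              push_neg
              exact ⟨hxu, hxv⟩
            rw [degE_erase_not_mem hxe, hdeg x hxST, Function.update_of_ne hxu]
      · -- j maps into source
        intro F hF
        simp only [Finset.mem_filter, Finset.mem_univ, true_and] at hF
        obtain ⟨hT0, hdeg⟩ := hF
        obtain ⟨g1, g2, g3⟩ := hT0
        have hsuvF : s(u, v) ∉ F := by
          intro hmem
          obtain ⟨a, ha, b, hb, hab⟩ := g1 _ hmem
          have hvab : v ∈ s(a, b) := hab ▸ (by simp : v ∈ s(u, v))
          rcases Sym2.mem_iff.mp hvab with rfl | rfl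
          · exact hvS ha
          · exact Finset.notMem_erase v T hb
        have hdFv : degE F v = 0 := by
          apply degE_eq_zero
          intro e he hve
          obtain ⟨a, ha, b, hb, rfl⟩ := g1 e he
          rcases Sym2.mem_iff.mp hve with rfl | rfl
          · exact hvS ha
          · exact Finset.notMem_erase v T hb
        have hd' : Disjoint S (T.erase v) := hd.mono_right (Finset.erase_subset _ _)
        have hvnot : v ∉ S ∪ T.erase v := by
          rw [Finset.mem_union]
          rintro (h' | h')
          · exact hvS h'
          · exact Finset.notMem_erase v T h'
        have hins := TreeOn.insertLeaf hd' ⟨g1, g2, g3⟩ hu hvnot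
        rw [Finset.insert_erase hv] at hins
        simp only [hf, Finset.mem_filter, hA, Finset.mem_univ, true_and]
        refine ⟨⟨hins, ?_⟩, Finset.mem_insert_self _ _⟩
        intro x hx
        by_cases hxv : x = v
        · subst hxv
          rw [degE_insert_mem hsuvF (by simp), hdFv, hkv]
        · have hxTe : x ∈ S ∪ T.erase v := by
            rcases Finset.mem_union.mp hx with h' | h'
            · exact Finset.mem_union_left _ h'
            · exact Finset.mem_union_right _ (Finset.mem_erase.mpr ⟨hxv, h'⟩)
          by_cases hxu : x = u
          · subst hxu
            rw [degE_insert_mem hsuvF (by simp), hdeg x hxTe, Function.update_self]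
            omega
          · have hxe : x ∉ s(u, v) := by
              rw [Sym2.mem_iff]
              push_neg
              exact ⟨hxu, hxv⟩
            rw [degE_insert_not_mem hxe, hdeg x hxTe, Function.update_of_ne hxu]
      · -- left inverse
        intro E hE
        simp only [hf, Finset.mem_filter] at hE
        exact Finset.insert_erase hE.2
      · -- right inverse
        intro F hF
        simp only [Finset.mem_filter, Finset.mem_univ, true_and] at hF
        have hsuvF : s(u, v) ∉ F := by
          intro hmem
          obtain ⟨a, ha, b, hb, hab⟩ := hF.1.1 _ hmem
          have hvab : v ∈ s(a, b) := hab ▸ (by simp : v ∈ s(u, v))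
          rcases Sym2.mem_iff.mp hvab with rfl | rfl
          · exact hvS ha
          · exact Finset.notMem_erase v T hb
        exact Finset.erase_insert hsuvF
  rw [hTC, hcover, Finset.card_biUnion hdisjU]
  exact Finset.sum_congr rfl hcardu

lemma treeCount_base {a b : V} (hab : a ≠ b) {k : V → ℕ} (hka : k a = 0) (hkb : k b = 0) :
    treeCount ({a} : Finset V) ({b} : Finset V) k = 1 := by
  classical
  rw [treeCount]
  rw [Finset.card_eq_one]
  refine ⟨{s(a, b)}, ?_⟩
  ext E
  simp only [Finset.mem_filter, Finset.mem_univ, true_and, Finset.mem_singleton]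
  constructor
  · rintro ⟨⟨h1, h2, h3⟩, hdeg⟩
    have hsub : E ⊆ {s(a, b)} := by
      intro e he
      obtain ⟨x, hx, y, hy, rfl⟩ := h1 e he
      rw [Finset.mem_singleton] at hx hy
      subst hx; subst hy
      exact Finset.mem_singleton_self _
    have hda : degE E a = 1 := by
      rw [hdeg a (by simp), hka]
    have hne : E.Nonempty := by
      by_contra hcon
      rw [Finset.not_nonempty_iff_eq_empty] at hcon
      rw [hcon] at hda
      simp [degE] at hda
    rw [Finset.eq_singleton_iff_nonempty_unique_mem]
    exact ⟨hne, fun e he => Finset.mem_singleton.mp (hsub he)⟩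
  · rintro rfl
    have hadj : (SimpleGraph.fromEdgeSet (({s(a, b)} : Finset (Sym2 V)) : Set (Sym2 V))).Adj a b := by
      rw [SimpleGraph.fromEdgeSet_adj]
      exact ⟨by simp, hab⟩
    refine ⟨⟨?_, ?_, ?_⟩, ?_⟩
    · intro e he
      rw [Finset.mem_singleton] at he
      exact ⟨a, Finset.mem_singleton_self _, b, Finset.mem_singleton_self _, he⟩
    · intro x hx y hy
      simp only [Finset.mem_union, Finset.mem_singleton] at hx hy
      rcases hx with rfl | rfl <;> rcases hy with rfl | rfl
      · exact SimpleGraph.Reachable.refl _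
      · exact hadj.reachable
      · exact hadj.symm.reachable
      · exact SimpleGraph.Reachable.refl _
    · intro w c hc
      have h3 := hc.three_le_length
      have hnodup := hc.isCircuit.isTrail.edges_nodup
      have hsub : c.edges.toFinset ⊆ {s(a, b)} := by
        intro e he
        rw [List.mem_toFinset] at he
        have := c.edges_subset_edgeSet he
        rw [SimpleGraph.edgeSet_fromEdgeSet] at this
        have h' := this.1
        rw [Finset.coe_singleton, Set.mem_singleton_iff] at h'
        exact Finset.mem_singleton.mpr h'
      have hcard := Finset.card_le_card hsub
      rw [List.toFinset_card_of_nodup hnodup, SimpleGraph.Walk.length_edges] at hcard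
      simp at hcard
      omega
    · intro x hx
      simp only [Finset.mem_union, Finset.mem_singleton] at hx
      have hda : degE ({s(a, b)} : Finset (Sym2 V)) a = 1 := by
        rw [degE]
        rw [Finset.filter_singleton, if_pos (by simp)]
        simp
      have hdb : degE ({s(a, b)} : Finset (Sym2 V)) b = 1 := by
        rw [degE]
        rw [Finset.filter_singleton, if_pos (by simp)]
        simp
      rcases hx with rfl | rfl
      · rw [hda, hka]
      · rw [hdb, hkb]

lemma main_step {N : ℕ}
    (ih : ∀ (S T : Finset V) (k : V → ℕ), S.card + T.card ≤ N → Disjoint S T →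
      S.Nonempty → T.Nonempty → (∑ a ∈ S, k a) = T.card - 1 →
      (∑ b ∈ T, k b) = S.card - 1 →
      treeCount S T k * ((∏ a ∈ S, (k a).factorial) * ∏ b ∈ T, (k b).factorial) =
        (T.card - 1).factorial * (S.card - 1).factorial)
    (S T : Finset V) (k : V → ℕ) (hN : S.card + T.card ≤ N + 1) (hd : Disjoint S T)
    (hS : S.Nonempty)
    (hsum : (∑ a ∈ S, k a) = T.card - 1) (hsum' : (∑ b ∈ T, k b) = S.card - 1)
    {v : V} (hv : v ∈ T) (hkv : k v = 0) (hT2 : 2 ≤ T.card) :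
    treeCount S T k * ((∏ a ∈ S, (k a).factorial) * ∏ b ∈ T, (k b).factorial) =
      (T.card - 1).factorial * (S.card - 1).factorial := by
  classical
  rw [step_count hd hv hkv hS hT2, Finset.sum_mul]
  have hTe : (T.erase v).card = T.card - 1 := Finset.card_erase_of_mem hv
  have hstep : ∀ u ∈ S, (if k u = 0 then 0 else
      treeCount S (T.erase v) (Function.update k u (k u - 1))) *
        ((∏ a ∈ S, (k a).factorial) * ∏ b ∈ T, (k b).factorial)
      = k u * ((T.card - 2).factorial * (S.card - 1).factorial) := by
    intro u hu
    by_cases hku : k u = 0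
    · rw [if_pos hku, hku]
      ring
    · rw [if_neg hku]
      have hkuge : 1 ≤ k u := Nat.one_le_iff_ne_zero.mpr hku
      set k' := Function.update k u (k u - 1) with hk'
      have huT : u ∉ T := fun h => Finset.disjoint_left.mp hd hu h
      have hd' : Disjoint S (T.erase v) := hd.mono_right (Finset.erase_subset _ _)
      have hTe1 : (T.erase v).Nonempty := by
        rw [← Finset.card_pos, hTe]
        omega
      have hsum1 : (∑ a ∈ S, k' a) = (T.erase v).card - 1 := by
        rw [hTe, hk', Finset.sum_update_of_mem hu]
        rw [← Finset.add_sum_erase S k hu, Finset.erase_eq] at hsum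
        omega
      have hkT : ∀ b ∈ T.erase v, k' b = k b := by
        intro b hb
        have hbu : b ≠ u := fun h => huT (h ▸ Finset.mem_of_mem_erase hb)
        exact Function.update_of_ne hbu _ _
      have hsum2 : (∑ b ∈ T.erase v, k' b) = S.card - 1 := by
        calc ∑ b ∈ T.erase v, k' b = ∑ b ∈ T.erase v, k b := Finset.sum_congr rfl hkT
          _ = k v + ∑ b ∈ T.erase v, k b := by rw [hkv, Nat.zero_add]
          _ = ∑ b ∈ T, k b := Finset.add_sum_erase T k hv
          _ = S.card - 1 := hsum'
      have hIH := ih S (T.erase v) k' (by rw [hTe]; omega) hd' hS hTe1 hsum1 hsum2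
      rw [hTe] at hIH
      have hfacu : (k u).factorial = k u * (k u - 1).factorial := by
        conv_lhs => rw [show k u = (k u - 1) + 1 by omega]
        rw [Nat.factorial_succ]
        congr 1
        omega
      have hPS : (∏ a ∈ S, (k a).factorial) = k u * ∏ a ∈ S, (k' a).factorial := by
        rw [← Finset.prod_erase_mul S _ hu, ← Finset.prod_erase_mul S (fun a => (k' a).factorial) hu]
        have h1 : ∀ a ∈ S.erase u, (k' a).factorial = (k a).factorial := by
          intro a ha
          rw [hk', Function.update_of_ne (Finset.ne_of_mem_erase ha)]
        rw [Finset.prod_congr rfl h1, hk', Function.update_self, hfacu]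
        ring
      have hPT : (∏ b ∈ T, (k b).factorial) = ∏ b ∈ T.erase v, (k' b).factorial := by
        rw [← Finset.prod_erase_mul T _ hv]
        have h1 : ∀ b ∈ T.erase v, (k b).factorial = (k' b).factorial := by
          intro b hb
          rw [hkT b hb]
        rw [Finset.prod_congr rfl h1, hkv]
        simp
      calc treeCount S (T.erase v) k' *
            ((∏ a ∈ S, (k a).factorial) * ∏ b ∈ T, (k b).factorial)
          = k u * (treeCount S (T.erase v) k' *
              ((∏ a ∈ S, (k' a).factorial) * ∏ b ∈ T.erase v, (k' b).factorial)) := by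
            rw [hPS, hPT]
            ring
        _ = k u * ((T.card - 1 - 1).factorial * (S.card - 1).factorial) := by rw [hIH]
        _ = k u * ((T.card - 2).factorial * (S.card - 1).factorial) := by
            rw [Nat.sub_sub]
  rw [Finset.sum_congr rfl hstep, ← Finset.sum_mul, hsum]
  have hfac : (T.card - 1).factorial = (T.card - 1) * (T.card - 2).factorial := by
    have h2 : T.card - 1 = (T.card - 2) + 1 := by omega
    rw [h2, Nat.factorial_succ, ← h2]
  rw [hfac]
  ring

lemma base_both {S T : Finset V} {k : V → ℕ} (hd : Disjoint S T)
    (hS1 : S.card = 1) (hT1 : T.card = 1)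
    (hsum : (∑ a ∈ S, k a) = T.card - 1) (hsum' : (∑ b ∈ T, k b) = S.card - 1) :
    treeCount S T k * ((∏ a ∈ S, (k a).factorial) * ∏ b ∈ T, (k b).factorial) =
      (T.card - 1).factorial * (S.card - 1).factorial := by
  obtain ⟨a, ha⟩ := Finset.card_eq_one.mp hS1
  obtain ⟨b, hb⟩ := Finset.card_eq_one.mp hT1
  subst ha
  subst hb
  simp only [Finset.sum_singleton, Finset.card_singleton] at hsum hsum'
  have hab : a ≠ b := by
    intro h
    exact Finset.disjoint_left.mp hd (Finset.mem_singleton_self a)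
      (h ▸ Finset.mem_singleton_self b)
  rw [treeCount_base hab hsum hsum']
  simp [hsum, hsum']

lemma treeCount_factorial (N : ℕ) : ∀ (S T : Finset V) (k : V → ℕ), S.card + T.card ≤ N →
    Disjoint S T → S.Nonempty → T.Nonempty →
    (∑ a ∈ S, k a) = T.card - 1 → (∑ b ∈ T, k b) = S.card - 1 →
    treeCount S T k * ((∏ a ∈ S, (k a).factorial) * ∏ b ∈ T, (k b).factorial) =
      (T.card - 1).factorial * (S.card - 1).factorial := by
  induction N with
  | zero =>
    intro S T k h hd hS hT _ _
    have := hS.card_pos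
    have := hT.card_pos
    omega
  | succ N ih =>
    intro S T k hN hd hS hT hsum hsum'
    have hzero : (∃ v ∈ T, k v = 0) ∨ (∃ v ∈ S, k v = 0) := by
      by_contra hcon
      push_neg at hcon
      obtain ⟨hT0, hS0⟩ := hcon
      have h1 : T.card ≤ ∑ b ∈ T, k b := by
        calc T.card = ∑ _b ∈ T, 1 := by simp
          _ ≤ ∑ b ∈ T, k b :=
            Finset.sum_le_sum (fun b hb => Nat.one_le_iff_ne_zero.mpr (hT0 b hb))
      have h2 : S.card ≤ ∑ a ∈ S, k a := by
        calc S.card = ∑ _a ∈ S, 1 := by simp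
          _ ≤ ∑ a ∈ S, k a :=
            Finset.sum_le_sum (fun a ha => Nat.one_le_iff_ne_zero.mpr (hS0 a ha))
      have := hS.card_pos
      have := hT.card_pos
      omega
    rcases hzero with ⟨v, hv, hkv⟩ | ⟨v, hv, hkv⟩
    · by_cases hT2 : 2 ≤ T.card
      · exact main_step ih S T k hN hd hS hsum hsum' hv hkv hT2
      · have hT1 : T.card = 1 := by
          have := hT.card_pos
          omega
        have hTv : T = {v} := by
          rw [Finset.eq_singleton_iff_unique_mem]
          refine ⟨hv, fun x hx => ?_⟩
          rw [Finset.card_eq_one] at hT1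
          obtain ⟨c, hc⟩ := hT1
          rw [hc, Finset.mem_singleton] at hx hv
          rw [hx, hv]
        have hS1 : S.card = 1 := by
          rw [hTv, Finset.sum_singleton, hkv] at hsum'
          have := hS.card_pos
          omega
        exact base_both hd hS1 hT1 hsum hsum'
    · by_cases hS2 : 2 ≤ S.card
      · have h := main_step ih T S k (by omega) hd.symm hT hsum' hsum hv hkv hS2
        calc treeCount S T k * ((∏ a ∈ S, (k a).factorial) * ∏ b ∈ T, (k b).factorial)
            = treeCount T S k * ((∏ b ∈ T, (k b).factorial) * ∏ a ∈ S, (k a).factorial) := by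
              rw [treeCount_comm]
              ring
          _ = (S.card - 1).factorial * (T.card - 1).factorial := h
          _ = (T.card - 1).factorial * (S.card - 1).factorial := Nat.mul_comm _ _
      · have hS1 : S.card = 1 := by
          have := hS.card_pos
          omega
        have hSv : S = {v} := by
          rw [Finset.eq_singleton_iff_unique_mem]
          refine ⟨hv, fun x hx => ?_⟩
          rw [Finset.card_eq_one] at hS1
          obtain ⟨c, hc⟩ := hS1
          rw [hc, Finset.mem_singleton] at hx hv
          rw [hx, hv]
        have hT1 : T.card = 1 := by
          rw [hSv, Finset.sum_singleton, hkv] at hsum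
          have := hT.card_pos
          omega
        exact base_both hd hS1 hT1 hsum hsum'

lemma treeCount_eq {S T : Finset V} {k : V → ℕ} (hd : Disjoint S T) (hS : S.Nonempty)
    (hT : T.Nonempty) (hsum : (∑ a ∈ S, k a) = T.card - 1)
    (hsum' : (∑ b ∈ T, k b) = S.card - 1) :
    treeCount S T k = Nat.multinomial S k * Nat.multinomial T k := by
  have h := treeCount_factorial (S.card + T.card) S T k le_rfl hd hS hT hsum hsum'
  have h1 := Nat.multinomial_spec S k
  have h2 := Nat.multinomial_spec T k
  rw [hsum] at h1
  rw [hsum'] at h2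
  have hP : 0 < ∏ a ∈ S, (k a).factorial :=
    Finset.prod_pos fun _ _ => Nat.factorial_pos _
  have hQ : 0 < ∏ b ∈ T, (k b).factorial :=
    Finset.prod_pos fun _ _ => Nat.factorial_pos _
  apply Nat.eq_of_mul_eq_mul_right (Nat.mul_pos hP hQ)
  calc treeCount S T k * ((∏ a ∈ S, (k a).factorial) * ∏ b ∈ T, (k b).factorial)
      = (T.card - 1).factorial * (S.card - 1).factorial := h
    _ = ((∏ a ∈ S, (k a).factorial) * Nat.multinomial S k) *
        ((∏ b ∈ T, (k b).factorial) * Nat.multinomial T k) := by rw [h1, h2]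
    _ = Nat.multinomial S k * Nat.multinomial T k *
        ((∏ a ∈ S, (k a).factorial) * ∏ b ∈ T, (k b).factorial) := by ring

open scoped Classical in
lemma treeOn_card_edges {S T : Finset V} {E : Finset (Sym2 V)} (hd : Disjoint S T)
    (hST : S ∪ T = Finset.univ) (hS : S.Nonempty) (h : TreeOn S T E) :
    E.card = S.card + T.card - 1 := by
  obtain ⟨h1, h2, h3⟩ := h
  have hconn : (SimpleGraph.fromEdgeSet (E : Set (Sym2 V))).Connected := by
    rw [SimpleGraph.connected_iff]
    constructor
    · intro x y
      exact h2 x (hST ▸ Finset.mem_univ x) y (hST ▸ Finset.mem_univ y)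
    · obtain ⟨a, ha⟩ := hS
      exact ⟨a⟩
  have htree : (SimpleGraph.fromEdgeSet (E : Set (Sym2 V))).IsTree := ⟨hconn, h3⟩
  have hcard := htree.card_edgeFinset
  have hE : (SimpleGraph.fromEdgeSet (E : Set (Sym2 V))).edgeFinset = E := by
    ext e
    rw [SimpleGraph.mem_edgeFinset, edgeSet_eq hd h1]
    exact Finset.mem_coe
  rw [hE] at hcard
  have hV : Fintype.card V = S.card + T.card := by
    rw [← Finset.card_union_of_disjoint hd, hST]
    exact Finset.card_univ.symm
  omega

open scoped Classical in
lemma treeOn_sum_deg {S T : Finset V} {E : Finset (Sym2 V)} (hd : Disjoint S T)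
    (h1 : ∀ e ∈ E, ∃ a ∈ S, ∃ b ∈ T, e = s(a, b)) :
    ∑ a ∈ S, degE E a = E.card := by
  have hdeg : ∀ a, degE E a = ∑ e ∈ E, if a ∈ e then 1 else 0 := by
    intro a
    rw [degE, Finset.card_filter]
  calc ∑ a ∈ S, degE E a = ∑ a ∈ S, ∑ e ∈ E, if a ∈ e then 1 else 0 := by
        exact Finset.sum_congr rfl fun a _ => hdeg a
    _ = ∑ e ∈ E, ∑ a ∈ S, if a ∈ e then 1 else 0 := Finset.sum_comm
    _ = ∑ e ∈ E, 1 := by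
        apply Finset.sum_congr rfl
        intro e he
        obtain ⟨a, ha, b, hb, rfl⟩ := h1 e he
        have hbS : b ∉ S := fun hbS => Finset.disjoint_left.mp hd hbS hb
        rw [← Finset.card_filter]
        have : S.filter (fun x => x ∈ s(a, b)) = {a} := by
          ext x
          simp only [Finset.mem_filter, Finset.mem_singleton, Sym2.mem_iff]
          constructor
          · rintro ⟨hxS, rfl | rfl⟩
            · rfl
            · exact absurd hxS hbS
          · rintro rfl
            exact ⟨ha, Or.inl rfl⟩
        rw [this, Finset.card_singleton]
    _ = E.card := by simp

lemma sum_multinomial_piAntidiag (S : Finset V) (n : ℕ) :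
    ∑ k ∈ Finset.piAntidiag S n, Nat.multinomial S k = S.card ^ n := by
  have h := Finset.sum_pow_eq_sum_piAntidiag S (fun _ => (1 : ℕ)) n
  simp only [Finset.sum_const, smul_eq_mul, mul_one, one_pow, Finset.prod_const_one,
    Nat.cast_id] at h
  rw [← h]

open scoped Classical in
lemma treeOn_count {S T : Finset V} (hd : Disjoint S T) (hST : S ∪ T = Finset.univ)
    (hS : S.Nonempty) (hT : T.Nonempty) :
    (Finset.univ.filter (fun E : Finset (Sym2 V) => TreeOn S T E)).card =
      S.card ^ (T.card - 1) * T.card ^ (S.card - 1) := by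
  have hST2 : 2 ≤ (S ∪ T).card := by
    rw [Finset.card_union_of_disjoint hd]
    have := hS.card_pos
    have := hT.card_pos
    omega
  set D := (Finset.piAntidiag S (T.card - 1)) ×ˢ (Finset.piAntidiag T (S.card - 1)) with hD
  set f : Finset (Sym2 V) → (V → ℕ) × (V → ℕ) := fun E =>
    (fun x => if x ∈ S then degE E x - 1 else 0,
     fun x => if x ∈ T then degE E x - 1 else 0) with hfdef
  have hsums : ∀ E : Finset (Sym2 V), TreeOn S T E →
      (∑ a ∈ S, (degE E a - 1) = T.card - 1) ∧ (∑ b ∈ T, (degE E b - 1) = S.card - 1) := by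
    intro E hTree
    obtain ⟨h1, h2, h3⟩ := hTree
    have hdegpos : ∀ x ∈ S ∪ T, 1 ≤ degE E x := fun x hx =>
      degE_pos hd ⟨h1, h2, h3⟩ hx hST2
    have hcardE := treeOn_card_edges hd hST hS ⟨h1, h2, h3⟩
    have hsumS := treeOn_sum_deg hd h1
    have hsumT : ∑ b ∈ T, degE E b = E.card := by
      apply treeOn_sum_deg hd.symm
      intro e he
      obtain ⟨a, ha, b, hb, rfl⟩ := h1 e he
      exact ⟨b, hb, a, ha, Sym2.eq_swap⟩
    constructor
    · have hplus : ∑ a ∈ S, (degE E a - 1) + S.card = ∑ a ∈ S, degE E a := by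
        calc ∑ a ∈ S, (degE E a - 1) + S.card
            = ∑ a ∈ S, ((degE E a - 1) + 1) := by
              rw [Finset.sum_add_distrib, Finset.sum_const, smul_eq_mul, mul_one]
          _ = ∑ a ∈ S, degE E a := by
              apply Finset.sum_congr rfl
              intro a ha
              have := hdegpos a (Finset.mem_union_left _ ha)
              omega
      rw [hsumS, hcardE] at hplus
      have := hT.card_pos
      omega
    · have hplus : ∑ b ∈ T, (degE E b - 1) + T.card = ∑ b ∈ T, degE E b := by
        calc ∑ b ∈ T, (degE E b - 1) + T.card
            = ∑ b ∈ T, ((degE E b - 1) + 1) := by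
              rw [Finset.sum_add_distrib, Finset.sum_const, smul_eq_mul, mul_one]
          _ = ∑ b ∈ T, degE E b := by
              apply Finset.sum_congr rfl
              intro b hb
              have := hdegpos b (Finset.mem_union_right _ hb)
              omega
      rw [hsumT, hcardE] at hplus
      have := hS.card_pos
      omega
  have hf : ∀ E ∈ Finset.univ.filter (fun E : Finset (Sym2 V) => TreeOn S T E), f E ∈ D := by
    intro E hE
    rw [Finset.mem_filter] at hE
    obtain ⟨hs1, hs2⟩ := hsums E hE.2
    rw [hD, Finset.mem_product]
    constructor
    · rw [Finset.mem_piAntidiag]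
      constructor
      · rw [hfdef]
        calc ∑ a ∈ S, (if a ∈ S then degE E a - 1 else 0) = ∑ a ∈ S, (degE E a - 1) := by
              apply Finset.sum_congr rfl
              intro a ha
              rw [if_pos ha]
          _ = T.card - 1 := hs1
      · intro i hi
        rw [hfdef] at hi
        by_cases him : i ∈ S
        · exact him
        · simp [him] at hi
    · rw [Finset.mem_piAntidiag]
      constructor
      · rw [hfdef]
        calc ∑ b ∈ T, (if b ∈ T then degE E b - 1 else 0) = ∑ b ∈ T, (degE E b - 1) := by
              apply Finset.sum_congr rfl
              intro b hb
              rw [if_pos hb]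
          _ = S.card - 1 := hs2
      · intro i hi
        rw [hfdef] at hi
        by_cases him : i ∈ T
        · exact him
        · simp [him] at hi
  rw [Finset.card_eq_sum_card_fiberwise hf]
  have hfiber : ∀ p ∈ D,
      ((Finset.univ.filter (fun E : Finset (Sym2 V) => TreeOn S T E)).filter
        (fun E => f E = p)).card = treeCount S T (fun x => p.1 x + p.2 x) := by
    intro p hp
    rw [hD, Finset.mem_product, Finset.mem_piAntidiag, Finset.mem_piAntidiag] at hp
    obtain ⟨⟨hp1sum, hp1sup⟩, hp2sum, hp2sup⟩ := hp
    have hp2S : ∀ a ∈ S, p.2 a = 0 := by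
      intro a ha
      by_contra hcon
      exact Finset.disjoint_left.mp hd ha (hp2sup a hcon)
    have hp1T : ∀ b ∈ T, p.1 b = 0 := by
      intro b hb
      by_contra hcon
      exact Finset.disjoint_left.mp hd (hp1sup b hcon) hb
    rw [treeCount]
    congr 1
    rw [Finset.filter_filter]
    apply Finset.filter_congr
    intro E _
    constructor
    · rintro ⟨hTree, hfe⟩
      refine ⟨hTree, ?_⟩
      intro x hx
      have hdx : 1 ≤ degE E x := degE_pos hd hTree hx hST2
      rcases Finset.mem_union.mp hx with hxS | hxT
      · have hxT : x ∉ T := fun h => Finset.disjoint_left.mp hd hxS h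
        have e1 : p.1 x = degE E x - 1 := by
          rw [← hfe, hfdef]
          simp [hxS]
        have e2 : p.2 x = 0 := by
          rw [← hfe, hfdef]
          simp [hxT]
        omega
      · have hxS : x ∉ S := fun h => Finset.disjoint_left.mp hd h hxT
        have e1 : p.1 x = 0 := by
          rw [← hfe, hfdef]
          simp [hxS]
        have e2 : p.2 x = degE E x - 1 := by
          rw [← hfe, hfdef]
          simp [hxT]
        omega
    · rintro ⟨hTree, hdeg⟩
      refine ⟨hTree, ?_⟩
      have hc1 : (f E).1 = p.1 := by
        funext x
        rw [hfdef]
        by_cases hxS : x ∈ S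
        · have hdx := hdeg x (Finset.mem_union_left _ hxS)
          have := hp2S x hxS
          simp only [hxS, if_true]
          omega
        · simp only [hxS, if_false]
          by_contra hcon
          exact hxS (hp1sup x fun h => hcon h.symm)
      have hc2 : (f E).2 = p.2 := by
        funext x
        rw [hfdef]
        by_cases hxT : x ∈ T
        · have hdx := hdeg x (Finset.mem_union_right _ hxT)
          have hxS : x ∉ S := fun h => Finset.disjoint_left.mp hd h hxT
          have := hp1T x hxT
          simp only [hxT, if_true]
          omega
        · simp only [hxT, if_false]
          by_contra hcon
          exact hxT (hp2sup x fun h => hcon h.symm)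
      exact Prod.ext hc1 hc2
  rw [Finset.sum_congr rfl hfiber]
  have hmult : ∀ p ∈ D, treeCount S T (fun x => p.1 x + p.2 x)
      = Nat.multinomial S p.1 * Nat.multinomial T p.2 := by
    intro p hp
    rw [hD, Finset.mem_product, Finset.mem_piAntidiag, Finset.mem_piAntidiag] at hp
    obtain ⟨⟨hp1sum, hp1sup⟩, hp2sum, hp2sup⟩ := hp
    have hp2S : ∀ a ∈ S, p.2 a = 0 := by
      intro a ha
      by_contra hcon
      exact Finset.disjoint_left.mp hd ha (hp2sup a hcon)
    have hp1T : ∀ b ∈ T, p.1 b = 0 := by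
      intro b hb
      by_contra hcon
      exact Finset.disjoint_left.mp hd (hp1sup b hcon) hb
    have hsum1 : ∑ a ∈ S, (p.1 a + p.2 a) = T.card - 1 := by
      calc ∑ a ∈ S, (p.1 a + p.2 a) = ∑ a ∈ S, p.1 a := by
            apply Finset.sum_congr rfl
            intro a ha
            rw [hp2S a ha]
            omega
        _ = T.card - 1 := hp1sum
    have hsum2 : ∑ b ∈ T, (p.1 b + p.2 b) = S.card - 1 := by
      calc ∑ b ∈ T, (p.1 b + p.2 b) = ∑ b ∈ T, p.2 b := by
            apply Finset.sum_congr rfl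
            intro b hb
            rw [hp1T b hb]
            omega
        _ = S.card - 1 := hp2sum
    rw [treeCount_eq hd hS hT hsum1 hsum2]
    congr 1
    · apply Nat.multinomial_congr
      intro a ha
      rw [hp2S a ha]
      omega
    · apply Nat.multinomial_congr
      intro b hb
      rw [hp1T b hb]
      omega
  rw [Finset.sum_congr rfl hmult, hD, Finset.sum_product]
  have : ∑ k1 ∈ Finset.piAntidiag S (T.card - 1), ∑ k2 ∈ Finset.piAntidiag T (S.card - 1),
      Nat.multinomial S k1 * Nat.multinomial T k2
      = (∑ k1 ∈ Finset.piAntidiag S (T.card - 1), Nat.multinomial S k1) *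
        (∑ k2 ∈ Finset.piAntidiag T (S.card - 1), Nat.multinomial T k2) := by
    rw [Finset.sum_mul_sum]
  rw [this, sum_multinomial_piAntidiag, sum_multinomial_piAntidiag]

/-- the number of spanning trees of the complete bipartite graph `K_{m,n}`
equals `m^(n−1) · n^(m−1)` for all `m, n ≥ 1`. -/
theorem spanningTrees_completeBipartite (m n : ℕ) (hm : 1 ≤ m) (hn : 1 ≤ n) :
    Nat.card {H : SimpleGraph (Fin m ⊕ Fin n) //
        H ≤ completeBipartiteGraph (Fin m) (Fin n) ∧ H.IsTree} =
      m ^ (n - 1) * n ^ (m - 1) := by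
  classical
  set S : Finset (Fin m ⊕ Fin n) := Finset.univ.image Sum.inl with hSdef
  set T : Finset (Fin m ⊕ Fin n) := Finset.univ.image Sum.inr with hTdef
  have hSmem : ∀ x : Fin m ⊕ Fin n, x ∈ S ↔ x.isLeft := by
    intro x
    rw [hSdef]
    cases x <;> simp
  have hTmem : ∀ x : Fin m ⊕ Fin n, x ∈ T ↔ x.isRight := by
    intro x
    rw [hTdef]
    cases x <;> simp
  have hd : Disjoint S T := by
    rw [Finset.disjoint_left]
    intro x hx hx'
    rw [hSmem] at hx
    rw [hTmem] at hx'
    cases x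
    · exact absurd hx' (by simp)
    · exact absurd hx (by simp)
  have hST : S ∪ T = Finset.univ := by
    ext x
    simp only [Finset.mem_union, Finset.mem_univ, iff_true, hSmem, hTmem]
    cases x
    · exact Or.inl rfl
    · exact Or.inr rfl
  have hScard : S.card = m := by
    rw [hSdef, Finset.card_image_of_injective _ Sum.inl_injective, Finset.card_univ,
      Fintype.card_fin]
  have hTcard : T.card = n := by
    rw [hTdef, Finset.card_image_of_injective _ Sum.inr_injective, Finset.card_univ,
      Fintype.card_fin]
  have hSne : S.Nonempty := by
    rw [← Finset.card_pos, hScard]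
    omega
  have hTne : T.Nonempty := by
    rw [← Finset.card_pos, hTcard]
    omega
  have key : (Finset.univ.filter (fun H : SimpleGraph (Fin m ⊕ Fin n) =>
      H ≤ completeBipartiteGraph (Fin m) (Fin n) ∧ H.IsTree)).card =
      (Finset.univ.filter (fun E : Finset (Sym2 (Fin m ⊕ Fin n)) => TreeOn S T E)).card := by
    refine Finset.card_bij' (fun H _ => H.edgeFinset)
      (fun E _ => SimpleGraph.fromEdgeSet (E : Set (Sym2 (Fin m ⊕ Fin n)))) ?_ ?_ ?_ ?_
    · intro H hH
      rw [Finset.mem_filter] at hH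
      obtain ⟨-, hle, htree⟩ := hH
      have hback : SimpleGraph.fromEdgeSet ((H.edgeFinset : Finset (Sym2 (Fin m ⊕ Fin n))) :
          Set (Sym2 (Fin m ⊕ Fin n))) = H := by
        rw [SimpleGraph.coe_edgeFinset, SimpleGraph.fromEdgeSet_edgeSet]
      rw [Finset.mem_filter]
      refine ⟨Finset.mem_univ _, ?_, ?_, ?_⟩
      · intro e he
        rw [SimpleGraph.mem_edgeFinset] at he
        revert he
        induction e using Sym2.inductionOn with
        | hf x y =>
          intro he
          rw [SimpleGraph.mem_edgeSet] at he
          have hc := hle he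
          simp only [completeBipartiteGraph_adj] at hc
          rcases hc with ⟨hx, hy⟩ | ⟨hx, hy⟩
          · exact ⟨x, (hSmem x).mpr hx, y, (hTmem y).mpr hy, rfl⟩
          · exact ⟨y, (hSmem y).mpr hy, x, (hTmem x).mpr hx, Sym2.eq_swap⟩
      · intro x _ y _
        rw [hback]
        exact htree.isConnected.preconnected x y
      · rw [hback]
        exact htree.IsAcyclic
    · intro E hE
      rw [Finset.mem_filter] at hE
      obtain ⟨-, h1, h2, h3⟩ := hE
      rw [Finset.mem_filter]
      refine ⟨Finset.mem_univ _, ?_, ?_, h3⟩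
      · intro x y hxy
        rw [SimpleGraph.fromEdgeSet_adj] at hxy
        obtain ⟨he, hne⟩ := hxy
        obtain ⟨a, ha, b, hb, hab⟩ := h1 _ he
        have haL : a.isLeft := (hSmem a).mp ha
        have hbR : b.isRight := (hTmem b).mp hb
        rw [Sym2.eq_iff] at hab
        simp only [completeBipartiteGraph_adj]
        rcases hab with ⟨rfl, rfl⟩ | ⟨rfl, rfl⟩
        · exact Or.inl ⟨haL, hbR⟩
        · exact Or.inr ⟨hbR, haL⟩
      · rw [SimpleGraph.connected_iff]
        constructor
        · intro x y
          exact h2 x (hST ▸ Finset.mem_univ x) y (hST ▸ Finset.mem_univ y)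
        · exact ⟨Sum.inl ⟨0, hm⟩⟩
    · intro H hH
      simp only [SimpleGraph.coe_edgeFinset, SimpleGraph.fromEdgeSet_edgeSet]
    · intro E hE
      rw [Finset.mem_filter] at hE
      obtain ⟨-, h1, -, -⟩ := hE
      apply Finset.coe_injective
      simp only [SimpleGraph.coe_edgeFinset]
      exact edgeSet_eq hd h1
  rw [Nat.card_eq_fintype_card, Fintype.card_subtype, key,
    treeOn_count hd hST hSne hTne, hScard, hTcard]
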